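/- Let B be a building set on a finite ground set V, and let N, N' be two adjacent maximal B-nested sets with N \ {B₀} = N' \ {B₀'} and parent P. Then the characteristic vectors in ℝ^V satisfy the linear relation χ(B₀) + χ(B₀') + Σ_{K ∈ cc(P \ (B₀ ∪ B₀'))} χ(K) = χ(P) + Σ_{K ∈ cc(B₀ ∩ B₀')} χ(K), where cc(U) denotes the set of connected components of U. -/

import Mathlib

open scoped Classical

variable {V : Type*} [Fintype V] [DecidableEq V]

/-- A building set on the finite ground set `V`. -/
def IsBuildingSet (B : Finset (Finset V)) : Prop :=
  (∀ b ∈ B, b.Nonempty) ∧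
  (∀ b₁ ∈ B, ∀ b₂ ∈ B, (b₁ ∩ b₂).Nonempty → b₁ ∪ b₂ ∈ B) ∧
  (∀ v : V, {v} ∈ B)

/-- `M` is an inclusion-maximal block of `B` strictly contained in `P`. -/
def MaxIn (B : Finset (Finset V)) (P M : Finset V) : Prop :=
  M ∈ B ∧ M ⊂ P ∧ ∀ C ∈ B, M ⊂ C → ¬ C ⊂ P

/-- The block `P` is elementary. -/
def Elementary (B : Finset (Finset V)) (P : Finset V) : Prop :=
  ∀ B' ∈ B, ∀ B'' ∈ B, B' ≠ P → B'' ≠ P → P = B' ∪ B'' → B' ∩ B'' = ∅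

/-- The connected components of `U`: inclusion-maximal blocks of `B` contained in `U`. -/
noncomputable def ccSet (B : Finset (Finset V)) (U : Finset V) : Finset (Finset V) :=
  B.filter (fun K => K ⊆ U ∧ ∀ C ∈ B, C ⊆ U → K ⊆ C → K = C)

/-- A `B`-nested set: contained in `B`, containing all maximal elements of `B`,
and such that for every subset `X` whose union lies in `B`, the union lies in `X`. -/
def IsNested (B N : Finset (Finset V)) : Prop :=
  N ⊆ B ∧
  (∀ K ∈ B, (∀ C ∈ B, K ⊆ C → K = C) → K ∈ N) ∧
  (∀ X ⊆ N, X.sup id ∈ B → X.sup id ∈ X)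

/-- A maximal `B`-nested set (inclusion-maximal among `B`-nested sets). -/
def IsMaxNested (B N : Finset (Finset V)) : Prop :=
  IsNested B N ∧ ∀ N', IsNested B N' → N ⊆ N' → N = N'

/-- Two blocks are exchangeable if two maximal nested sets differ exactly by them. -/
def ExchangeableB (B : Finset (Finset V)) (b b' : Finset V) : Prop :=
  b ≠ b' ∧ ∃ N N', IsMaxNested B N ∧ IsMaxNested B N' ∧ b ∈ N ∧ b' ∈ N' ∧
    N.erase b = N'.erase b'

/-- `P` is the parent of `b` in `N`: the unique minimal element of `{C ∈ N | b ⊊ C}`. -/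
def IsParent (N : Finset (Finset V)) (b P : Finset V) : Prop :=
  P ∈ N ∧ b ⊂ P ∧ ∀ C ∈ N, b ⊂ C → P ⊆ C

/-- `(b, b', P)` is an exchange frame. -/
def IsExchangeFrame (B : Finset (Finset V)) (b b' P : Finset V) : Prop :=
  ∃ N N', IsMaxNested B N ∧ IsMaxNested B N' ∧ b ∈ N ∧ b' ∈ N' ∧ b ≠ b' ∧
    N.erase b = N'.erase b' ∧ IsParent N b P

/-- Characteristic vector of a subset of `V` in `ℝ^V`. -/
def chi (S : Finset V) : V → ℝ := fun v => if v ∈ S then 1 else 0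

/-- The root of `C` in the nested set `N`. -/
noncomputable def root (N : Finset (Finset V)) (C : Finset V) : Finset V :=
  C \ (N.filter (fun D => D ⊂ C)).sup id


section Aux

variable {B N N' : Finset (Finset V)}

/-- Components of `U` partition `U`: the sum of their characteristic vectors is `chi U`. -/
lemma sum_ccSet_chi (B : Finset (Finset V)) (hB : IsBuildingSet B) (U : Finset V) :
    ∑ K ∈ ccSet B U, chi K = chi U := by
  funext v
  rw [Finset.sum_apply]
  simp only [chi]
  rw [Finset.sum_boole]
  by_cases hv : v ∈ U
  · rw [if_pos hv]
    have hs : (({v} : Finset V)) ∈ B.filter (fun C => v ∈ C ∧ C ⊆ U) :=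
      Finset.mem_filter.2 ⟨hB.2.2 v, Finset.mem_singleton_self v,
        Finset.singleton_subset_iff.2 hv⟩
    obtain ⟨K₀, hK₀, hmax⟩ := (B.filter (fun C => v ∈ C ∧ C ⊆ U)).exists_maximal ⟨_, hs⟩
    obtain ⟨hK₀B, hvK₀, hK₀U⟩ := Finset.mem_filter.1 hK₀
    have hcc : K₀ ∈ ccSet B U := by
      refine Finset.mem_filter.2 ⟨hK₀B, hK₀U, fun C hC hCU hKC => ?_⟩
      by_contra hne
      exact hne (Finset.Subset.antisymm hKC (hmax (Finset.mem_filter.2 ⟨hC, hKC hvK₀, hCU⟩) hKC))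
    have hfil : (ccSet B U).filter (fun K => v ∈ K) = {K₀} := by
      ext K
      simp only [Finset.mem_filter, Finset.mem_singleton]
      constructor
      · rintro ⟨hKcc, hvK⟩
        obtain ⟨hKB, hKU, hKmax⟩ := Finset.mem_filter.1 hKcc
        have hu : K ∪ K₀ ∈ B := hB.2.1 K hKB K₀ hK₀B ⟨v, Finset.mem_inter.2 ⟨hvK, hvK₀⟩⟩
        have h1 : K = K ∪ K₀ :=
          hKmax _ hu (Finset.union_subset hKU hK₀U) Finset.subset_union_left
        have h2 : K₀ = K ∪ K₀ := by
          obtain ⟨_, hK₀U', hK₀max⟩ := Finset.mem_filter.1 hcc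
          exact hK₀max _ hu (Finset.union_subset hKU hK₀U) Finset.subset_union_right
        exact h1.trans h2.symm
      · rintro rfl
        exact ⟨hcc, hvK₀⟩
    rw [hfil]
    simp
  · rw [if_neg hv]
    have hfil : (ccSet B U).filter (fun K => v ∈ K) = ∅ := by
      refine Finset.filter_eq_empty_iff.2 fun K hK hvK => ?_
      obtain ⟨_, hKU, _⟩ := Finset.mem_filter.1 hK
      exact hv (hKU hvK)
    rw [hfil]
    simp

/-- Nested sets are laminar. -/
lemma nested_laminar (hB : IsBuildingSet B) (hN : IsNested B N)
    {A A' : Finset V} (hA : A ∈ N) (hA' : A' ∈ N) (h : (A ∩ A').Nonempty) :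
    A ⊆ A' ∨ A' ⊆ A := by
  have hu : A ∪ A' ∈ B := hB.2.1 A (hN.1 hA) A' (hN.1 hA') h
  have hsub : ({A, A'} : Finset (Finset V)) ⊆ N := by
    intro x hx
    rcases Finset.mem_insert.1 hx with h1 | h1
    · rw [h1]; exact hA
    · rw [Finset.mem_singleton.1 h1]; exact hA'
  have hsup : ({A, A'} : Finset (Finset V)).sup id = A ∪ A' := by
    rw [Finset.sup_insert, Finset.sup_singleton]
    rfl
  have hm := hN.2.2 {A, A'} hsub (by rw [hsup]; exact hu)
  rw [hsup] at hm
  rcases Finset.mem_insert.1 hm with h1 | h1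
  · exact Or.inr (h1 ▸ Finset.subset_union_right)
  · exact Or.inl ((Finset.mem_singleton.1 h1) ▸ Finset.subset_union_left)

lemma sup_erase_eq {X : Finset (Finset V)} {A : Finset V} (hA : A ∈ X)
    (h : A ≤ (X.erase A).sup id) : (X.erase A).sup id = X.sup id := by
  conv_rhs => rw [← Finset.insert_erase hA]
  rw [Finset.sup_insert]
  exact (sup_eq_right.2 h).symm

lemma sup_eq_insert_erase {X : Finset (Finset V)} {A : Finset V} (hA : A ∈ X) :
    X.sup id = A ⊔ (X.erase A).sup id := by
  conv_lhs => rw [← Finset.insert_erase hA]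
  rw [Finset.sup_insert]
  rfl

/-- The key combinatorial lemma: in an exchange with parent `P`, also `b' ⊆ P`. -/
lemma exchange_subset_parent (hB : IsBuildingSet B)
    (hN : IsMaxNested B N) (hN' : IsMaxNested B N')
    {b b' P : Finset V} (hb : b ∈ N) (hb' : b' ∈ N') (hne : b ≠ b')
    (hadj : N.erase b = N'.erase b') (hpar : IsParent N b P) : b' ⊆ P := by
  have hbB : b ∈ B := hN.1.1 hb
  have hb'B : b' ∈ B := hN'.1.1 hb'
  have hbne : b.Nonempty := hB.1 b hbB
  have hb'ne : b'.Nonempty := hB.1 b' hb'B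
  have hbP : b ⊆ P := hpar.2.1.subset
  have hbnP : b ≠ P := fun h => (h ▸ hpar.2.1).false
  have hbN' : b ∉ N' := by
    intro h
    have : b ∈ N'.erase b' := Finset.mem_erase.2 ⟨hne, h⟩
    rw [← hadj] at this
    exact (Finset.mem_erase.1 this).1 rfl
  have hb'N : b' ∉ N := by
    intro h
    have : b' ∈ N.erase b := Finset.mem_erase.2 ⟨hne.symm, h⟩
    rw [hadj] at this
    exact (Finset.mem_erase.1 this).1 rfl
  have hPN' : P ∈ N' := by
    have : P ∈ N.erase b := Finset.mem_erase.2 ⟨fun h => hbnP h.symm, hpar.1⟩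
    rw [hadj] at this
    exact Finset.mem_of_mem_erase this
  -- rule out P ⊂ b'
  have hnPb' : ¬ P ⊂ b' := by
    intro hPb'
    have hnest : IsNested B (insert b' N) := by
      refine ⟨Finset.insert_subset hb'B hN.1.1, fun K hK hm => Finset.mem_insert_of_mem (hN.1.2.1 K hK hm), ?_⟩
      intro X hX hsX
      by_cases hb'X : b' ∈ X
      · by_cases hbX : b ∈ X
        · -- b ⊆ b', so sup X = sup (X.erase b), and X.erase b ⊆ N'
          have hbb' : b ⊆ b' := hbP.trans hPb'.subset
          have hXe : X.erase b ⊆ N' := by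
            intro A hA
            have hAb : A ≠ b := (Finset.mem_erase.1 hA).1
            rcases Finset.mem_insert.1 (hX (Finset.mem_of_mem_erase hA)) with h1 | h1
            · rw [h1]; exact hb'
            · have : A ∈ N.erase b := Finset.mem_erase.2 ⟨hAb, h1⟩
              rw [hadj] at this
              exact Finset.mem_of_mem_erase this
          have hle : (b : Finset V) ≤ (X.erase b).sup id := by
            have hb'e : b' ∈ X.erase b := Finset.mem_erase.2 ⟨fun h => hne h.symm, hb'X⟩
            exact hbb'.trans (Finset.le_sup (f := id) hb'e)
          have hsupe : (X.erase b).sup id = X.sup id := sup_erase_eq hbX hle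
          have := hN'.1.2.2 (X.erase b) hXe (by rw [hsupe]; exact hsX)
          rw [hsupe] at this
          exact Finset.mem_of_mem_erase this
        · -- X ⊆ N'
          have hXN' : X ⊆ N' := by
            intro A hA
            rcases Finset.mem_insert.1 (hX hA) with h1 | h1
            · rw [h1]; exact hb'
            · by_cases hAb : A = b
              · exact absurd (hAb ▸ hA) hbX
              · have : A ∈ N.erase b := Finset.mem_erase.2 ⟨hAb, h1⟩
                rw [hadj] at this
                exact Finset.mem_of_mem_erase this
          exact hN'.1.2.2 X hXN' hsX
      · have hXN : X ⊆ N := by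
          intro A hA
          rcases Finset.mem_insert.1 (hX hA) with h1 | h1
          · exact absurd (h1 ▸ hA) hb'X
          · exact h1
        exact hN.1.2.2 X hXN hsX
    have := hN.2 _ hnest (Finset.subset_insert _ _)
    exact hb'N (this ▸ Finset.mem_insert_self b' N)
  -- rule out b' ∩ P = ∅
  rcases (b' ∩ P).eq_empty_or_nonempty with hd | hint
  · exfalso
    have hbb' : b ∩ b' = ∅ := by
      rw [Finset.eq_empty_iff_forall_notMem]
      intro x hx
      have hx1 := Finset.mem_inter.1 hx
      have : x ∈ b' ∩ P := Finset.mem_inter.2 ⟨hx1.2, hbP hx1.1⟩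
      rw [hd] at this
      exact absurd this (Finset.notMem_empty x)
    -- insert b N' is not nested, because N' is maximal and b ∉ N'
    have hnot : ¬ IsNested B (insert b N') := by
      intro hnest
      have := hN'.2 _ hnest (Finset.subset_insert _ _)
      exact hbN' (this ▸ Finset.mem_insert_self b N')
    -- so there is a bad set X
    have hbad : ∃ X ∈ (insert b N').powerset.filter
        (fun X => X.sup id ∈ B ∧ X.sup id ∉ X), True := by
      by_contra hno
      push_neg at hno
      apply hnot
      refine ⟨Finset.insert_subset hbB hN'.1.1,
        fun K hK hm => Finset.mem_insert_of_mem (hN'.1.2.1 K hK hm), ?_⟩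
      intro X hX hsX
      by_contra hns
      exact hno X (Finset.mem_filter.2 ⟨Finset.mem_powerset.2 hX, hsX, hns⟩)
    obtain ⟨X₀, hX₀, -⟩ := hbad
    obtain ⟨X, hXmem, hXmin⟩ := Finset.exists_min_image _ Finset.card ⟨X₀, hX₀⟩
    obtain ⟨hX1, hX2, hX3⟩ := Finset.mem_filter.1 hXmem
    rw [Finset.mem_powerset] at hX1
    -- b ∈ X
    have hbX : b ∈ X := by
      by_contra hbX
      apply hX3
      refine hN'.1.2.2 X ?_ hX2
      intro A hA
      rcases Finset.mem_insert.1 (hX1 hA) with h1 | h1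
      · exact absurd (h1 ▸ hA) hbX
      · exact h1
    -- b' ∈ X
    have hb'X : b' ∈ X := by
      by_contra hb'X
      apply hX3
      refine hN.1.2.2 X ?_ hX2
      intro A hA
      rcases Finset.mem_insert.1 (hX1 hA) with h1 | h1
      · rw [h1]; exact hb
      · by_cases hAb' : A = b'
        · exact absurd (hAb' ▸ hA) hb'X
        · have : A ∈ N'.erase b' := Finset.mem_erase.2 ⟨hAb', h1⟩
          rw [← hadj] at this
          exact Finset.mem_of_mem_erase this
    -- consider insert P (X.erase b) ⊆ N'
    have hXeN' : X.erase b ⊆ N' := by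
      intro A hA
      rcases Finset.mem_insert.1 (hX1 (Finset.mem_of_mem_erase hA)) with h1 | h1
      · exact absurd h1 (Finset.mem_erase.1 hA).1
      · exact h1
    have hXhat : insert P (X.erase b) ⊆ N' := Finset.insert_subset hPN' hXeN'
    have hsup1 : X.sup id = b ⊔ (X.erase b).sup id := sup_eq_insert_erase hbX
    have hsuphat : (insert P (X.erase b)).sup id = P ⊔ X.sup id := by
      rw [Finset.sup_insert, hsup1, ← sup_assoc]
      simp only [id_eq]
      rw [sup_eq_left.2 hbP]
    have hPB : P ∈ B := hN.1.1 hpar.1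
    have hPsupB : P ⊔ X.sup id ∈ B := by
      obtain ⟨w, hw⟩ := hbne
      refine hB.2.1 P hPB (X.sup id) hX2 ⟨w, Finset.mem_inter.2 ⟨hbP hw, ?_⟩⟩
      exact Finset.le_sup (f := id) hbX hw
    have hmem := hN'.1.2.2 _ hXhat (by rw [hsuphat]; exact hPsupB)
    rw [hsuphat] at hmem
    rcases Finset.mem_insert.1 hmem with h1 | h1
    · -- P ⊔ sup X = P forces b' ⊆ P
      have hsle : X.sup id ≤ P := by
        rw [← h1]; exact le_sup_right
      obtain ⟨w, hw⟩ := hb'ne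
      have : w ∈ b' ∩ P := Finset.mem_inter.2 ⟨hw, hsle (Finset.le_sup (f := id) hb'X hw)⟩
      rw [hd] at this
      exact absurd this (Finset.notMem_empty w)
    · -- P ⊔ sup X = D for some D ∈ X.erase b
      set D := P ⊔ X.sup id with hD
      have hDX : D ∈ X := Finset.mem_of_mem_erase h1
      have hb'D : b' ⊆ D := (Finset.le_sup (f := id) hb'X).trans le_sup_right
      by_cases hDb' : D = b'
      · -- then P ⊆ b', but b ⊆ P and b ∩ b' = ∅
        obtain ⟨w, hw⟩ := hbne
        have hwb' : w ∈ b' := hDb' ▸ (le_sup_left : P ≤ D) (hbP hw)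
        have : w ∈ b ∩ b' := Finset.mem_inter.2 ⟨hw, hwb'⟩
        rw [hbb'] at this
        exact absurd this (Finset.notMem_empty w)
      · -- then b' ⊊ D with both in X : contradict minimality
        have hDe : D ∈ X.erase b' := Finset.mem_erase.2 ⟨hDb', hDX⟩
        have hle : (b' : Finset V) ≤ (X.erase b').sup id :=
          hb'D.trans (Finset.le_sup (f := id) hDe)
        have hsupe : (X.erase b').sup id = X.sup id := sup_erase_eq hb'X hle
        have hmem' : X.erase b' ∈ (insert b N').powerset.filter
            (fun Y => Y.sup id ∈ B ∧ Y.sup id ∉ Y) := by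
          refine Finset.mem_filter.2 ⟨Finset.mem_powerset.2
            ((Finset.erase_subset _ _).trans hX1), ?_, ?_⟩
          · rw [hsupe]; exact hX2
          · rw [hsupe]; exact fun h => hX3 (Finset.mem_of_mem_erase h)
        have hcard := hXmin _ hmem'
        rw [Finset.card_erase_of_mem hb'X] at hcard
        have hpos : 0 < X.card := Finset.card_pos.2 ⟨b', hb'X⟩
        omega
  · -- b' ∩ P nonempty: laminarity in N' gives b' ⊆ P (the other cases are excluded)
    rcases nested_laminar hB hN'.1 hb' hPN' hint with h1 | h1
    · exact h1
    · by_cases hPb' : P = b'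
      · exact absurd (hPb' ▸ hpar.1) hb'N
      · exact absurd ⟨h1, fun h => hPb' (Finset.Subset.antisymm h1 h)⟩ hnPb'

lemma chi_exchange {b b' P : Finset V} (hb : b ⊆ P) (hb' : b' ⊆ P) :
    chi b + chi b' + chi (P \ (b ∪ b')) = chi P + chi (b ∩ b') := by
  funext v
  simp only [Pi.add_apply, chi, Finset.mem_sdiff, Finset.mem_union, Finset.mem_inter]
  by_cases h3 : v ∈ P
  · by_cases h1 : v ∈ b <;> by_cases h2 : v ∈ b' <;> simp [h1, h2, h3]
  · have h1 : v ∉ b := fun h => h3 (hb h)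
    have h2 : v ∉ b' := fun h => h3 (hb' h)
    simp [h1, h2, h3]

end Aux

theorem stmt9 (B : Finset (Finset V)) (hB : IsBuildingSet B)
    (N N' : Finset (Finset V)) (hN : IsMaxNested B N) (hN' : IsMaxNested B N')
    (b b' P : Finset V) (hb : b ∈ N) (hb' : b' ∈ N') (hne : b ≠ b')
    (hadj : N.erase b = N'.erase b') (hpar : IsParent N b P) :
    chi b + chi b' + ∑ K ∈ ccSet B (P \ (b ∪ b')), chi K =
      chi P + ∑ K ∈ ccSet B (b ∩ b'), chi K := by
  have hb'P : b' ⊆ P := exchange_subset_parent hB hN hN' hb hb' hne hadj hpar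
  rw [sum_ccSet_chi B hB, sum_ccSet_chi B hB]
  exact chi_exchange hpar.2.1.subset hb'P
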